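/- For random variables X valued in 𝕏 and Y valued in a Polish metric space (𝕐, d_𝕐) with finite p-th moment, the averaged conditional Wasserstein measure satisfies E_X[W_{d_𝕐,p}(L(Y|X), L(Y))^p] ≤ E[d_𝕐(Y,Y')^p], where Y' is an independent copy of Y. -/

import Mathlib

open MeasureTheory ProbabilityTheory
open scoped ENNReal

/-- The Wasserstein distance of order `p` with ground cost `d`, defined as the infimum
over couplings of `P` and `Q` of the `p`-th root of the expected `p`-th power cost. -/
noncomputable def Wass {α : Type*} [MeasurableSpace α]
    (d : α → α → ℝ) (p : ℝ) (P Q : Measure α) : ℝ :=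
  sInf ((fun γ : Measure (α × α) => (∫ z, d z.1 z.2 ^ p ∂γ) ^ (1 / p)) ''
    {γ | γ.map Prod.fst = P ∧ γ.map Prod.snd = Q})

theorem stmt4 {Ω 𝕏 𝕐 : Type*} [MeasurableSpace Ω] [MeasurableSpace 𝕏]
    [MetricSpace 𝕐] [PolishSpace 𝕐] [MeasurableSpace 𝕐] [BorelSpace 𝕐] [Nonempty 𝕐]
    (μ : Measure Ω) [IsProbabilityMeasure μ]
    (X : Ω → 𝕏) (Y : Ω → 𝕐) (hX : Measurable X) (hY : Measurable Y)
    (p : ℝ) (hp : 1 ≤ p) (y₀ : 𝕐)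
    (hmY : Integrable (fun ω => dist (Y ω) y₀ ^ p) μ)
    (Y' : Ω → 𝕐) (hY' : Measurable Y')
    (hindep : IndepFun Y Y' μ) (hcopy : μ.map Y' = μ.map Y) :
    (∫ x, Wass (fun y y' => dist y y') p (condDistrib Y X μ x) (μ.map Y) ^ p ∂(μ.map X))
      ≤ ∫ ω, dist (Y ω) (Y' ω) ^ p ∂μ := by
  have hp0 : (0:ℝ) < p := lt_of_lt_of_le one_pos hp
  set ν := μ.map Y with hν
  have hνprob : IsProbabilityMeasure ν := Measure.isProbabilityMeasure_map hY.aemeasurable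
  set κ := condDistrib Y X μ with hκ
  -- measurability of the cost
  have hcost : Measurable (fun z : 𝕐 × 𝕐 => dist z.1 z.2 ^ p) :=
    (Real.continuous_rpow_const hp0.le).measurable.comp (measurable_fst.dist measurable_snd)
  set G : 𝕐 × 𝕐 → ℝ≥0∞ := fun z => ENNReal.ofReal (dist z.1 z.2 ^ p) with hGdef
  have hGm : Measurable G := ENNReal.measurable_ofReal.comp hcost
  -- real cost integral over product coupling
  set g : 𝕏 → ℝ := fun x => ∫ z, dist z.1 z.2 ^ p ∂((κ x).prod ν) with hgdef
  set L : 𝕏 → ℝ≥0∞ := fun x => ∫⁻ z, G z ∂((κ x).prod ν) with hLdef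
  have hgL : ∀ x, g x = (L x).toReal := by
    intro x
    rw [hgdef, hLdef]
    exact integral_eq_lintegral_of_nonneg_ae
      (Filter.Eventually.of_forall fun z => Real.rpow_nonneg dist_nonneg p)
      hcost.aestronglyMeasurable
  -- inner function
  set h : 𝕐 → ℝ≥0∞ := fun y => ∫⁻ y', G (y, y') ∂ν with hhdef
  have hhm : Measurable h := hGm.lintegral_prod_right'
  have hLh : ∀ x, L x = ∫⁻ y, h y ∂(κ x) := fun x => lintegral_prod _ hGm.aemeasurable
  have hm2 : Measurable fun q : 𝕏 × 𝕐 => h q.2 := hhm.comp measurable_snd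
  have hLfun : L = fun x => ∫⁻ y, h y ∂(κ x) := funext hLh
  have hLm : Measurable L := by
    rw [hLfun]
    exact Measurable.lintegral_kernel_prod_right' hm2
  -- compProd identity
  have hcomp : (μ.map X) ⊗ₘ κ = μ.map (fun ω => (X ω, Y ω)) := by
    rw [hκ, condDistrib, ← Measure.fst_map_prodMk (X := X) hY]
    exact Measure.disintegrate _ _
  -- the total lintegral
  have hLint : ∫⁻ x, L x ∂(μ.map X) = ∫⁻ ω, G (Y ω, Y' ω) ∂μ := by
    have h1 : ∫⁻ x, L x ∂(μ.map X) = ∫⁻ q, h q.2 ∂((μ.map X) ⊗ₘ κ) := by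
      rw [Measure.lintegral_compProd hm2]
      simp_rw [hLh]
    have h2 : ∫⁻ q, h q.2 ∂((μ.map X) ⊗ₘ κ) = ∫⁻ ω, h (Y ω) ∂μ := by
      rw [hcomp, lintegral_map hm2 (hX.prodMk hY)]
    have h3 : ∫⁻ ω, h (Y ω) ∂μ = ∫⁻ y, h y ∂ν := (lintegral_map hhm hY).symm
    have h4 : ∫⁻ y, h y ∂ν = ∫⁻ z, G z ∂(ν.prod ν) := (lintegral_prod _ hGm.aemeasurable).symm
    have hprod : μ.map (fun ω => (Y ω, Y' ω)) = ν.prod ν := by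
      rw [(indepFun_iff_map_prod_eq_prod_map_map hY.aemeasurable hY'.aemeasurable).mp hindep,
        hcopy]
    have h5 : ∫⁻ z, G z ∂(ν.prod ν) = ∫⁻ ω, G (Y ω, Y' ω) ∂μ := by
      rw [← hprod, lintegral_map hGm (hY.prodMk hY')]
    rw [h1, h2, h3, h4, h5]
  -- integrability of the RHS integrand
  have hf' : Integrable (fun ω => dist (Y' ω) y₀ ^ p) μ := by
    have hfm : Measurable (fun y : 𝕐 => dist y y₀ ^ p) :=
      (Real.continuous_rpow_const hp0.le).measurable.comp (measurable_dist.comp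
        (measurable_id.prodMk measurable_const))
    have h1 : Integrable (fun y : 𝕐 => dist y y₀ ^ p) (μ.map Y) :=
      (integrable_map_measure hfm.aestronglyMeasurable hY.aemeasurable).mpr hmY
    rw [show Measure.map Y μ = Measure.map Y' μ from by rw [hcopy, hν]] at h1
    exact (integrable_map_measure hfm.aestronglyMeasurable hY'.aemeasurable).mp h1
  have hbound : ∀ ω, dist (Y ω) (Y' ω) ^ p ≤
      2 ^ p * (dist (Y ω) y₀ ^ p + dist (Y' ω) y₀ ^ p) := by
    intro ω
    set a := dist (Y ω) y₀ with ha
    set b := dist (Y' ω) y₀ with hb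
    have ha0 : 0 ≤ a := dist_nonneg
    have hb0 : 0 ≤ b := dist_nonneg
    have htri : dist (Y ω) (Y' ω) ≤ a + b := dist_triangle_right _ _ _
    have h1 : dist (Y ω) (Y' ω) ^ p ≤ (a + b) ^ p :=
      Real.rpow_le_rpow dist_nonneg htri hp0.le
    have h2 : a + b ≤ 2 * max a b := by
      have := le_max_left a b; have := le_max_right a b; linarith [le_max_left a b, le_max_right a b]
    have h3 : (a + b) ^ p ≤ (2 * max a b) ^ p :=
      Real.rpow_le_rpow (by positivity) h2 hp0.le
    have h4 : (2 * max a b) ^ p = 2 ^ p * max a b ^ p :=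
      Real.mul_rpow (by norm_num) (le_max_of_le_left ha0)
    have h5 : max a b ^ p ≤ a ^ p + b ^ p := by
      rcases max_cases a b with ⟨hm, _⟩ | ⟨hm, _⟩ <;> rw [hm] <;>
        [exact le_add_of_nonneg_right (Real.rpow_nonneg hb0 p);
         exact le_add_of_nonneg_left (Real.rpow_nonneg ha0 p)]
    calc dist (Y ω) (Y' ω) ^ p ≤ (2 * max a b) ^ p := le_trans h1 h3
      _ = 2 ^ p * max a b ^ p := h4
      _ ≤ 2 ^ p * (a ^ p + b ^ p) := by
          exact mul_le_mul_of_nonneg_left h5 (Real.rpow_nonneg (by norm_num) p)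
  have hintRHS : Integrable (fun ω => dist (Y ω) (Y' ω) ^ p) μ := by
    refine Integrable.mono (((hmY.add hf').const_mul (2 ^ p)) : _) ?_ ?_
    · exact ((Real.continuous_rpow_const hp0.le).measurable.comp
        (hY.dist hY')).aestronglyMeasurable
    · refine Filter.Eventually.of_forall fun ω => ?_
      rw [Real.norm_eq_abs, Real.norm_eq_abs, abs_of_nonneg (Real.rpow_nonneg dist_nonneg p)]
      refine le_trans (hbound ω) (le_abs_self _)
  -- finiteness
  have hRHSlint : ∫⁻ ω, G (Y ω, Y' ω) ∂μ ≠ ⊤ := by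
    have := hintRHS.hasFiniteIntegral
    rw [hasFiniteIntegral_iff_ofReal
      (Filter.Eventually.of_forall fun ω => Real.rpow_nonneg dist_nonneg p)] at this
    exact this.ne
  have hLne : ∫⁻ x, L x ∂(μ.map X) ≠ ⊤ := by rw [hLint]; exact hRHSlint
  -- pointwise bound on Wass
  have hWle : ∀ x, Wass (fun y y' => dist y y') p (κ x) ν ^ p ≤ g x := by
    intro x
    have hκx : IsProbabilityMeasure (κ x) := inferInstance
    have hBdd : BddBelow ((fun γ : Measure (𝕐 × 𝕐) => (∫ z, dist z.1 z.2 ^ p ∂γ) ^ (1 / p)) ''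
        {γ | γ.map Prod.fst = κ x ∧ γ.map Prod.snd = ν}) := by
      refine ⟨0, fun a ha => ?_⟩
      obtain ⟨γ, -, rfl⟩ := ha
      exact Real.rpow_nonneg (integral_nonneg fun z => Real.rpow_nonneg dist_nonneg p) _
    have hmem : ((κ x).prod ν) ∈ {γ : Measure (𝕐 × 𝕐) | γ.map Prod.fst = κ x ∧
        γ.map Prod.snd = ν} := by
      constructor
      · simp [Measure.map_fst_prod]
      · simp [Measure.map_snd_prod]
    have hle : Wass (fun y y' => dist y y') p (κ x) ν ≤ g x ^ (1 / p) :=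
      csInf_le hBdd ⟨_, hmem, rfl⟩
    have hW0 : 0 ≤ Wass (fun y y' => dist y y') p (κ x) ν := by
      refine Real.sInf_nonneg fun a ha => ?_
      obtain ⟨γ, -, rfl⟩ := ha
      exact Real.rpow_nonneg (integral_nonneg fun z => Real.rpow_nonneg dist_nonneg p) _
    have hg0 : 0 ≤ g x := integral_nonneg fun z => Real.rpow_nonneg dist_nonneg p
    calc Wass (fun y y' => dist y y') p (κ x) ν ^ p ≤ (g x ^ (1 / p)) ^ p :=
          Real.rpow_le_rpow hW0 hle hp0.le
      _ = g x := by
          rw [← Real.rpow_mul hg0, one_div_mul_cancel hp0.ne', Real.rpow_one]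
  -- integrability of g
  have hgfun : g = fun x => (L x).toReal := funext hgL
  have hgInt : Integrable g (μ.map X) := by
    rw [hgfun]
    exact integrable_toReal_of_lintegral_ne_top hLm.aemeasurable hLne
  have hgint_eq : ∫ x, g x ∂(μ.map X) = (∫⁻ ω, G (Y ω, Y' ω) ∂μ).toReal := by
    rw [hgfun, integral_toReal hLm.aemeasurable (ae_lt_top hLm hLne), hLint]
  have hRHS_eq : ∫ ω, dist (Y ω) (Y' ω) ^ p ∂μ = (∫⁻ ω, G (Y ω, Y' ω) ∂μ).toReal := by
    exact integral_eq_lintegral_of_nonneg_ae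
      (Filter.Eventually.of_forall fun ω => Real.rpow_nonneg dist_nonneg p)
      ((Real.continuous_rpow_const hp0.le).measurable.comp (hY.dist hY')).aestronglyMeasurable
  calc (∫ x, Wass (fun y y' => dist y y') p (κ x) ν ^ p ∂(μ.map X)) ≤ ∫ x, g x ∂(μ.map X) := by
        refine integral_mono_of_nonneg ?_ hgInt (Filter.Eventually.of_forall hWle)
        refine Filter.Eventually.of_forall fun x => ?_
        refine Real.rpow_nonneg ?_ p
        refine Real.sInf_nonneg fun a ha => ?_
        obtain ⟨γ, -, rfl⟩ := ha
        exact Real.rpow_nonneg (integral_nonneg fun z => Real.rpow_nonneg dist_nonneg p) _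
    _ = (∫⁻ ω, G (Y ω, Y' ω) ∂μ).toReal := hgint_eq
    _ = ∫ ω, dist (Y ω) (Y' ω) ^ p ∂μ := hRHS_eq.symm
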